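/- For all (α,β) with sin β ≠ 0, the quaternion-valued derivatives of ι(α,β) satisfy ι_α⁻¹·∂(ι_α⁻¹)/∂α + ι_β⁻¹·∂(ι_α⁻¹)/∂β = −ι·ι_α⁻¹. -/

import Mathlib

open Quaternion

noncomputable section

/-- `ι(α,β) = cos α sin β · i + sin α sin β · j + cos β · k`, a unit imaginary quaternion. -/
def iota (α β : ℝ) : ℍ[ℝ] :=
  ⟨0, Real.cos α * Real.sin β, Real.sin α * Real.sin β, Real.cos β⟩
/-- `ι_α = ∂ι/∂α`. -/
def iotaA (α β : ℝ) : ℍ[ℝ] := deriv (fun a => iota a β) α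
/-- `ι_β = ∂ι/∂β`. -/
def iotaB (α β : ℝ) : ℍ[ℝ] := deriv (fun b => iota α b) β

/-- Partial derivative in `α` of a quaternion-valued function of `(α,β)`. -/
def pA (g : ℝ → ℝ → ℍ[ℝ]) (α β : ℝ) : ℍ[ℝ] := deriv (fun a => g a β) α
/-- Partial derivative in `β` of a quaternion-valued function of `(α,β)`. -/
def pB (g : ℝ → ℝ → ℍ[ℝ]) (α β : ℝ) : ℍ[ℝ] := deriv (fun b => g α b) β
/-- The left angular derivative `∂g/∂ιₗ := ι_α⁻¹ (∂g/∂α) + ι_β⁻¹ (∂g/∂β)`. -/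
def DI (g : ℝ → ℝ → ℍ[ℝ]) (α β : ℝ) : ℍ[ℝ] :=
  (iotaA α β)⁻¹ * pA g α β + (iotaB α β)⁻¹ * pB g α β

/-- Constructor helper pinned at type `ℍ[ℝ]`. -/
def mkQ (w x y z : ℝ) : ℍ[ℝ] := ⟨w, x, y, z⟩

@[simp] lemma mkQ_re (w x y z : ℝ) : (mkQ w x y z).re = w := rfl
@[simp] lemma mkQ_imI (w x y z : ℝ) : (mkQ w x y z).imI = x := rfl
@[simp] lemma mkQ_imJ (w x y z : ℝ) : (mkQ w x y z).imJ = y := rfl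
@[simp] lemma mkQ_imK (w x y z : ℝ) : (mkQ w x y z).imK = z := rfl

/-- A quaternion-valued curve with zero real part has componentwise derivative. -/
lemma lit_eq (a b c d : ℝ) : (⟨a, b, c, d⟩ : ℍ[ℝ]) = mkQ a b c d := rfl

lemma hasDerivAt_quat {f g k : ℝ → ℝ} {f' g' k' x : ℝ}
    (hf : HasDerivAt f f' x) (hg : HasDerivAt g g' x) (hk : HasDerivAt k k' x) :
    HasDerivAt (fun t => mkQ 0 (f t) (g t) (k t)) (mkQ 0 f' g' k') x := by
  have h1 : HasDerivAt (fun t => f t • mkQ 0 1 0 0 + g t • mkQ 0 0 1 0 + k t • mkQ 0 0 0 1)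
      (f' • mkQ 0 1 0 0 + g' • mkQ 0 0 1 0 + k' • mkQ 0 0 0 1) x :=
    ((hf.smul_const _).add (hg.smul_const _)).add (hk.smul_const _)
  convert h1 using 1
  · funext t
    ext <;> simp
  · ext <;> simp

lemma iotaA_eq (α β : ℝ) :
    iotaA α β = ⟨0, -(Real.sin α * Real.sin β), Real.cos α * Real.sin β, 0⟩ := by
  have h : HasDerivAt (fun a => iota a β)
      (mkQ 0 (-(Real.sin α * Real.sin β)) (Real.cos α * Real.sin β) 0) α := by
    have := hasDerivAt_quat (f' := -Real.sin α * Real.sin β)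
      (g' := Real.cos α * Real.sin β) (k' := 0)
      ((Real.hasDerivAt_cos α).mul_const (Real.sin β))
      ((Real.hasDerivAt_sin α).mul_const (Real.sin β)) (hasDerivAt_const α (Real.cos β))
    simpa [iota, mkQ, neg_mul] using this
  rw [iotaA, h.deriv]; rfl

lemma iotaB_eq (α β : ℝ) :
    iotaB α β = ⟨0, Real.cos α * Real.cos β, Real.sin α * Real.cos β, -Real.sin β⟩ := by
  have h : HasDerivAt (fun b => iota α b)
      (mkQ 0 (Real.cos α * Real.cos β) (Real.sin α * Real.cos β) (-Real.sin β)) β := by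
    have := hasDerivAt_quat (f' := Real.cos α * Real.cos β)
      (g' := Real.sin α * Real.cos β) (k' := -Real.sin β)
      ((Real.hasDerivAt_sin β).const_mul (Real.cos α))
      ((Real.hasDerivAt_sin β).const_mul (Real.sin α)) (Real.hasDerivAt_cos β)
    simpa [iota, mkQ] using this
  rw [iotaB, h.deriv]; rfl

lemma normSq_iotaA (α β : ℝ) : normSq (iotaA α β) = Real.sin β ^ 2 := by
  rw [iotaA_eq]
  have := Real.sin_sq_add_cos_sq α
  erw [normSq_def']
  simp only
  nlinarith [this]

lemma inv_iotaA (α β : ℝ) :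
    (iotaA α β)⁻¹
      = ⟨0, Real.sin α / Real.sin β, -(Real.cos α / Real.sin β), 0⟩ := by
  rcases eq_or_ne (Real.sin β) 0 with hβ | hβ
  · have h0 : iotaA α β = 0 := by
      rw [iotaA_eq]; ext <;> simp [hβ]
    rw [h0, inv_zero]
    ext <;> simp [hβ]
  · rw [Quaternion.inv_def, normSq_iotaA, iotaA_eq]
    simp only [lit_eq]
    ext <;> simp <;> field_simp <;> ring

lemma inv_iotaB (α β : ℝ) :
    (iotaB α β)⁻¹
      = ⟨0, -(Real.cos α * Real.cos β), -(Real.sin α * Real.cos β), Real.sin β⟩ := by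
  have hns : normSq (iotaB α β) = 1 := by
    rw [iotaB_eq]
    erw [normSq_def']
    simp only
    nlinarith [Real.sin_sq_add_cos_sq α, Real.sin_sq_add_cos_sq β]
  rw [Quaternion.inv_def, hns, iotaB_eq]
  simp only [lit_eq]
  ext <;> simp

lemma derivA_inv (α β : ℝ) :
    deriv (fun a => (iotaA a β)⁻¹) α
      = ⟨0, Real.cos α / Real.sin β, Real.sin α / Real.sin β, 0⟩ := by
  have hfun : (fun a => (iotaA a β)⁻¹)
      = fun a => mkQ 0 (Real.sin a / Real.sin β) (-(Real.cos a / Real.sin β)) 0 := by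
    funext a; rw [inv_iotaA]; rfl
  rw [hfun]
  have h : HasDerivAt
      (fun a => mkQ 0 (Real.sin a / Real.sin β) (-(Real.cos a / Real.sin β)) 0)
      (mkQ 0 (Real.cos α / Real.sin β) (Real.sin α / Real.sin β) 0) α := by
    have := hasDerivAt_quat (f' := Real.cos α / Real.sin β)
      (g' := -(-Real.sin α / Real.sin β)) (k' := (0:ℝ))
      ((Real.hasDerivAt_sin α).div_const (Real.sin β))
      (((Real.hasDerivAt_cos α).div_const (Real.sin β)).neg) (hasDerivAt_const α (0:ℝ))
    simpa [neg_div] using this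
  rw [h.deriv]; rfl

lemma derivB_inv (α β : ℝ) (h : Real.sin β ≠ 0) :
    deriv (fun b => (iotaA α b)⁻¹)  β
      = ⟨0, -(Real.sin α * Real.cos β / Real.sin β ^ 2),
          Real.cos α * Real.cos β / Real.sin β ^ 2, 0⟩ := by
  have hfun : (fun b => (iotaA α b)⁻¹)
      = fun b => mkQ 0 (Real.sin α * (Real.sin b)⁻¹) (-(Real.cos α * (Real.sin b)⁻¹)) 0 := by
    funext b
    rw [inv_iotaA]
    ext <;> simp [mkQ, div_eq_mul_inv]
  rw [hfun]
  have hinv : HasDerivAt (fun b => (Real.sin b)⁻¹)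
      (-Real.cos β / Real.sin β ^ 2) β := (Real.hasDerivAt_sin β).inv h
  have hD : HasDerivAt
      (fun b => mkQ 0 (Real.sin α * (Real.sin b)⁻¹) (-(Real.cos α * (Real.sin b)⁻¹)) 0)
      (mkQ 0 (-(Real.sin α * Real.cos β / Real.sin β ^ 2))
          (Real.cos α * Real.cos β / Real.sin β ^ 2) 0) β := by
    have := hasDerivAt_quat (f' := Real.sin α * (-Real.cos β / Real.sin β ^ 2))
      (g' := -(Real.cos α * (-Real.cos β / Real.sin β ^ 2))) (k' := (0:ℝ))
      (hinv.const_mul (Real.sin α)) ((hinv.const_mul (Real.cos α)).neg) (hasDerivAt_const β (0:ℝ))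
    simp only [Pi.neg_apply] at this
    convert this using 2 <;> ring
  rw [hD.deriv]; rfl

/-- For `sin β ≠ 0`,
`ι_α⁻¹ ∂(ι_α⁻¹)/∂α + ι_β⁻¹ ∂(ι_α⁻¹)/∂β = -ι ι_α⁻¹`. -/
theorem iota_inv_derivative_identity (α β : ℝ) (h : Real.sin β ≠ 0) :
    (iotaA α β)⁻¹ * deriv (fun a => (iotaA a β)⁻¹) α
        + (iotaB α β)⁻¹ * deriv (fun b => (iotaA α b)⁻¹) β
      = -(iota α β * (iotaA α β)⁻¹) := by
  rw [inv_iotaA, inv_iotaB, derivA_inv, derivB_inv α β h]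
  simp only [lit_eq]
  have hα := Real.sin_sq_add_cos_sq α
  have hβ := Real.sin_sq_add_cos_sq β
  ext
  · simp [iota, lit_eq, Quaternion.re_mul]
    field_simp
    ring_nf
  · simp [iota, lit_eq, Quaternion.imI_mul]
    field_simp
  · simp [iota, lit_eq, Quaternion.imJ_mul]
    field_simp
  · simp [iota, lit_eq, Quaternion.imK_mul]
    field_simp
    ring_nf
    linear_combination (-(Real.sin α ^ 2 + Real.cos α ^ 2)) * hβ
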